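/- arXiv:1308.3562 — 6 statements merged into one kernel-verified Lean document; each statement's English description precedes it below -/
import Mathlib

section
/- Let X be a complex Banach space and A, B ∈ B(X). If Fix(AT) = Fix(BT) for every rank-one operator T ∈ B(X), then A = B. -/
open ContinuousLinearMap

variable {X : Type*} [NormedAddCommGroup X] [NormedSpace ℂ X] [CompleteSpace X]

theorem stmt2 (A B : X →L[ℂ] X)
    (h : ∀ T : X →L[ℂ] X, (∃ (x : X) (f : X →L[ℂ] ℂ), x ≠ 0 ∧ f ≠ 0 ∧ T = f.smulRight x) →
      {y : X | (A * T) y = y} = {y : X | (B * T) y = y}) : A = B := by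
  have key : ∀ (C D : X →L[ℂ] X),
      (∀ T : X →L[ℂ] X, (∃ (x : X) (f : X →L[ℂ] ℂ), x ≠ 0 ∧ f ≠ 0 ∧ T = f.smulRight x) →
        {y : X | (C * T) y = y} = {y : X | (D * T) y = y}) →
      ∀ x : X, x ≠ 0 → C x ≠ 0 → D x = C x := by
    intro C D hCD x hx hCx
    obtain ⟨g, hg1, hg2⟩ := exists_dual_vector ℂ (C x) (norm_ne_zero_iff.mpr hCx)
    set f : X →L[ℂ] ℂ := ((‖C x‖ : ℂ)⁻¹) • g with hfdef
    have hnorm : (‖C x‖ : ℂ) ≠ 0 := by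
      exact_mod_cast norm_ne_zero_iff.mpr hCx
    have hfCx : f (C x) = 1 := by
      simp only [hfdef, ContinuousLinearMap.smul_apply, hg2, smul_eq_mul]
      exact inv_mul_cancel₀ hnorm
    have hf : f ≠ 0 := by
      intro h0
      rw [h0] at hfCx
      simp at hfCx
    have hsets := hCD (f.smulRight x) ⟨x, f, hx, hf, rfl⟩
    have hmem : C x ∈ {y : X | ((C * f.smulRight x)) y = y} := by
      simp [mul_apply, smulRight_apply, hfCx]
    rw [hsets] at hmem
    simpa [mul_apply, smulRight_apply, hfCx] using hmem
  ext x
  by_cases hx : x = 0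
  · simp [hx]
  by_cases hA : A x = 0
  · by_cases hB : B x = 0
    · rw [hA, hB]
    · exact key B A (fun T hT => (h T hT).symm) x hx hB
  · exact (key A B h x hx hA).symm
end

section
/- Let X be a complex Banach space and φ : B(X) → B(X) a surjective map satisfying Fix(AB) = Fix(φ(A)φ(B)) for all A ∈ B(X) and all rank-one B ∈ B(X). Then φ is injective. -/
open ContinuousLinearMap

variable {X : Type*} [NormedAddCommGroup X] [NormedSpace ℂ X] [CompleteSpace X]

theorem stmt4 (φ : (X →L[ℂ] X) → (X →L[ℂ] X))
    (hsurj : Function.Surjective φ)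
    (h : ∀ A B : X →L[ℂ] X,
      (∃ (x : X) (f : X →L[ℂ] ℂ), x ≠ 0 ∧ f ≠ 0 ∧ B = f.smulRight x) →
      {y : X | (A * B) y = y} = {y : X | (φ A * φ B) y = y}) :
    Function.Injective φ := by
  have key : ∀ (A₁ A₂ : X →L[ℂ] X), φ A₁ = φ A₂ → ∀ x : X, A₁ x ≠ 0 → A₂ x = A₁ x := by
    intro A₁ A₂ hφ x hx
    have hx0 : x ≠ 0 := fun hh => hx (by simp [hh])
    obtain ⟨f, hf1, hf2⟩ := exists_dual_vector ℂ (A₁ x) (norm_ne_zero_iff.mpr hx)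
    set g : X →L[ℂ] ℂ := (‖A₁ x‖ : ℂ)⁻¹ • f with hgdef
    have hn : (‖A₁ x‖ : ℂ) ≠ 0 := by
      exact_mod_cast norm_ne_zero_iff.mpr hx
    have hg : g (A₁ x) = 1 := by
      simp [hgdef, hf2, inv_mul_cancel₀ hn]
    have hgne : g ≠ 0 := fun hh => by simp [hh] at hg
    have hB1 := h A₁ (g.smulRight x) ⟨x, g, hx0, hgne, rfl⟩
    have hB2 := h A₂ (g.smulRight x) ⟨x, g, hx0, hgne, rfl⟩
    rw [hφ] at hB1
    have hset : {y : X | (A₁ * g.smulRight x) y = y}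
        = {y : X | (A₂ * g.smulRight x) y = y} := hB1.trans hB2.symm
    have h1 : A₁ x ∈ {y : X | (A₁ * g.smulRight x) y = y} := by
      simp [Set.mem_setOf_eq, mul_apply, smulRight_apply, hg]
    rw [hset] at h1
    simpa [Set.mem_setOf_eq, mul_apply, smulRight_apply, hg] using h1
  intro A₁ A₂ hφ
  ext x
  by_cases h1 : A₁ x = 0
  · by_cases h2 : A₂ x = 0
    · rw [h1, h2]
    · have := key A₂ A₁ hφ.symm x h2
      exact absurd (this.symm.trans h1) h2
  · exact (key A₁ A₂ hφ x h1).symm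
end

section
/- Let X be a complex Banach space and φ : B(X) → B(X) a surjective map satisfying Fix(AB) = Fix(φ(A)φ(B)) for all A ∈ B(X) and all rank-one B. Then for every rank-one operator T, φ(T) is rank-one. -/
open ContinuousLinearMap

variable {X : Type*} [NormedAddCommGroup X] [NormedSpace ℂ X] [CompleteSpace X]

/-- If `a` is not a multiple of `b ≠ 0`, there is a continuous functional with
`g a = 1`, `g b = 0`. -/
lemma aux_sep {a b : X} (hb : b ≠ 0) (hab : ∀ c : ℂ, a ≠ c • b) :
    ∃ g : X →L[ℂ] ℂ, g a = 1 ∧ g b = 0 := by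
  obtain ⟨v, hv⟩ := SeparatingDual.exists_eq_one (R := ℂ) hb
  have ha' : a - v a • b ≠ 0 := by
    intro h0
    exact hab (v a) (by rwa [sub_eq_zero] at h0)
  obtain ⟨u, hu⟩ := SeparatingDual.exists_eq_one (R := ℂ) ha'
  have hu' : u a - v a * u b = 1 := by simpa [smul_eq_mul] using hu
  refine ⟨u - (u b) • v, ?_, ?_⟩
  · simp only [ContinuousLinearMap.sub_apply, ContinuousLinearMap.smul_apply, smul_eq_mul]
    linear_combination hu'
  · simp [hv]

theorem stmt5 (φ : (X →L[ℂ] X) → (X →L[ℂ] X))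
    (hsurj : Function.Surjective φ)
    (h : ∀ A B : X →L[ℂ] X,
      (∃ (x : X) (f : X →L[ℂ] ℂ), x ≠ 0 ∧ f ≠ 0 ∧ B = f.smulRight x) →
      {y : X | (A * B) y = y} = {y : X | (φ A * φ B) y = y}) :
    ∀ T : X →L[ℂ] X, (∃ (x : X) (f : X →L[ℂ] ℂ), x ≠ 0 ∧ f ≠ 0 ∧ T = f.smulRight x) →
      ∃ (x : X) (f : X →L[ℂ] ℂ), x ≠ 0 ∧ f ≠ 0 ∧ φ T = f.smulRight x := by
  rintro T ⟨x, f, hx, hf, rfl⟩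
  set S := φ (f.smulRight x) with hS
  obtain ⟨w, hw⟩ : ∃ w, f w ≠ 0 := by
    by_contra hc
    push_neg at hc
    exact hf (ContinuousLinearMap.ext fun y => by simp [hc])
  obtain ⟨z, hfz⟩ : ∃ z, f z = 1 :=
    ⟨(f w)⁻¹ • w, by simp [inv_mul_cancel₀ hw]⟩
  have hz : z ≠ 0 := by
    intro h0
    rw [h0, map_zero] at hfz
    exact zero_ne_one hfz
  have hfix : ∀ (A : X →L[ℂ] X) (y : X), A (f y • x) = y ↔ φ A (S y) = y := by
    intro A y
    have := h A (f.smulRight x) ⟨x, f, hx, hf, rfl⟩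
    have := Set.ext_iff.mp this y
    simpa [mul_apply] using this
  obtain ⟨g', hg'⟩ := SeparatingDual.exists_eq_one (R := ℂ) hx
  have hSz : S z ≠ 0 := by
    have h1 : (g'.smulRight z) (f z • x) = z := by simp [hfz, hg']
    have h2 := (hfix (g'.smulRight z) z).1 h1
    intro h0
    rw [h0, map_zero] at h2
    exact hz h2.symm
  have key : ∀ u, ∃ c : ℂ, S u = c • S z := by
    intro u
    by_contra hc
    push_neg at hc
    have hSu : S u ≠ 0 := by
      intro h0
      exact hc 0 (by simp [h0])
    have hdep2 : ∀ c : ℂ, S z ≠ c • S u := by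
      intro c h0
      have hc0 : c ≠ 0 := by
        rintro rfl
        rw [zero_smul] at h0
        exact hSz h0
      exact hc c⁻¹ (by rw [h0, smul_smul, inv_mul_cancel₀ hc0, one_smul])
    obtain ⟨g, hga, hgb⟩ := aux_sep hSz hc
    obtain ⟨g2, h2a, h2b⟩ := aux_sep hSu hdep2
    obtain ⟨A, hA⟩ := hsurj (g.smulRight u + g2.smulRight z)
    have hu : φ A (S u) = u := by rw [hA]; simp [hga, h2b]
    have hzf : φ A (S z) = z := by rw [hA]; simp [h2a, hgb]
    have hu' : A (f u • x) = u := (hfix A u).2 hu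
    have hz' : A (f z • x) = z := (hfix A z).2 hzf
    have hAx : A x = z := by
      rw [← hz', hfz, one_smul]
    have huz : u = f u • z := by
      conv_lhs => rw [← hu']
      rw [map_smul, hAx]
    refine hc (f u) ?_
    conv_lhs => rw [huz]
    rw [map_smul]
  obtain ⟨g₀, hg₀⟩ := SeparatingDual.exists_eq_one (R := ℂ) hSz
  refine ⟨S z, g₀.comp S, hSz, ?_, ?_⟩
  · intro h0
    have h1 : (g₀.comp S) z = 0 := by rw [h0]; rfl
    rw [ContinuousLinearMap.comp_apply, hg₀] at h1
    exact one_ne_zero h1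
  · ext y
    obtain ⟨c, hcy⟩ := key y
    show S y = (g₀ (S y)) • S z
    rw [hcy, map_smul, smul_eq_mul, hg₀, mul_one]
end

section
/- Let X be a complex Banach space with dim X ≥ 3 and φ : B(X) → B(X) a surjective map such that Fix(AB) = Fix(φ(A)φ(B)) for all A ∈ B(X) and all rank-one B. If additionally φ(I) = I and φ preserves rank-one operators, then φ(P) = P for every rank-one idempotent P. -/
open ContinuousLinearMap

variable {X : Type*} [NormedAddCommGroup X] [NormedSpace ℂ X] [CompleteSpace X]

theorem stmt16 (hdim : 3 ≤ Module.rank ℂ X) (φ : (X →L[ℂ] X) → (X →L[ℂ] X))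
    (hsurj : Function.Surjective φ)
    (h : ∀ A B : X →L[ℂ] X,
      (∃ (x : X) (f : X →L[ℂ] ℂ), x ≠ 0 ∧ f ≠ 0 ∧ B = f.smulRight x) →
      {y : X | (A * B) y = y} = {y : X | (φ A * φ B) y = y})
    (hI : φ 1 = 1)
    (hrank : ∀ T : X →L[ℂ] X,
      (∃ (x : X) (f : X →L[ℂ] ℂ), x ≠ 0 ∧ f ≠ 0 ∧ T = f.smulRight x) →
      ∃ (x : X) (f : X →L[ℂ] ℂ), x ≠ 0 ∧ f ≠ 0 ∧ φ T = f.smulRight x) :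
    ∀ P : X →L[ℂ] X, (∃ (x : X) (f : X →L[ℂ] ℂ), f x = 1 ∧ P = f.smulRight x) →
      φ P = P := by
  rintro P ⟨x, f, hfx, rfl⟩
  have hx : x ≠ 0 := by
    intro h0; rw [h0, map_zero] at hfx; exact one_ne_zero hfx.symm
  have hf : f ≠ 0 := by
    intro h0; rw [h0] at hfx; simp at hfx
  have hr1 : ∃ (x' : X) (f' : X →L[ℂ] ℂ), x' ≠ 0 ∧ f' ≠ 0 ∧
      f.smulRight x = f'.smulRight x' := ⟨x, f, hx, hf, rfl⟩
  obtain ⟨u, g, hu, hg, hφ⟩ := hrank (f.smulRight x) hr1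
  -- Fix(P) = Fix(φP)
  have hfix := h 1 (f.smulRight x) hr1
  rw [hI, one_mul, one_mul] at hfix
  have hxfix : φ (f.smulRight x) x = x := by
    have hxmem : x ∈ {y : X | (f.smulRight x) y = y} := by
      simp [smulRight_apply, hfx]
    rw [hfix] at hxmem
    exact hxmem
  have hgux : g x • u = x := by rw [hφ] at hxfix; simpa [smulRight_apply] using hxfix
  have hgx : g x ≠ 0 := by
    intro h0; rw [h0, zero_smul] at hgux; exact hx hgux.symm
  -- φP y = h' y • x where h' = (g x)⁻¹ • g
  set h' : X →L[ℂ] ℂ := (g x)⁻¹ • g with hh'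
  have hh'x : h' x = 1 := by simp [hh', inv_mul_cancel₀ hgx]
  have hφP : ∀ y, φ (f.smulRight x) y = h' y • x := by
    intro y
    rw [hφ]
    have hux : u = (g x)⁻¹ • x := by
      have : (g x)⁻¹ • (g x • u) = (g x)⁻¹ • x := by rw [hgux]
      rwa [smul_smul, inv_mul_cancel₀ hgx, one_smul] at this
    simp [smulRight_apply, hux, hh', smul_smul, mul_comm]
  -- ker f ⊆ ker h'
  have hker : ∀ w : X, f w = 0 → h' w = 0 := by
    intro w hfw
    by_contra hne
    set w₀ : X := (h' w)⁻¹ • w with hw₀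
    have hh'w₀ : h' w₀ = 1 := by simp [hw₀, inv_mul_cancel₀ hne]
    have hw₀ne : w₀ ≠ 0 := by
      intro h0; rw [h0, map_zero] at hh'w₀; exact one_ne_zero hh'w₀.symm
    obtain ⟨A, hA⟩ := hsurj (f.smulRight w₀)
    have hfixA := h A (f.smulRight x) hr1
    have hmem : w₀ ∈ {y : X | (φ A * φ (f.smulRight x)) y = y} := by
      show (φ A) ((φ (f.smulRight x)) w₀) = w₀
      simp only [Set.mem_setOf_eq, mul_apply, hφP w₀, hh'w₀, one_smul, hA,
        smulRight_apply, hfx, one_smul]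
    rw [← hfixA] at hmem
    have : A ((f.smulRight x) w₀) = w₀ := hmem
    rw [smulRight_apply] at this
    have hfw₀ : f w₀ = 0 := by simp [hw₀, hfw]
    rw [hfw₀, zero_smul, map_zero] at this
    exact hw₀ne this.symm
  -- h' = f
  have hhf : ∀ y, h' y = f y := by
    intro y
    have hfz : f (y - f y • x) = 0 := by simp [hfx]
    have := hker _ hfz
    rw [map_sub, map_smul, hh'x, smul_eq_mul, mul_one, sub_eq_zero] at this
    exact this
  ext y
  rw [hφP y, hhf y, smulRight_apply]
end

section
/- Let X be a complex Banach space with dim X ≥ 3 and φ : B(X) → B(X) a surjective map satisfying Fix(AB) = Fix(φ(A)φ(B)) for all A ∈ B(X) and all rank-one B ∈ B(X). Then φ(I) = I or φ(I) = −I. -/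
open ContinuousLinearMap

variable {X : Type*} [NormedAddCommGroup X] [NormedSpace ℂ X] [CompleteSpace X]

theorem stmt17 (hdim : 3 ≤ Module.rank ℂ X) (φ : (X →L[ℂ] X) → (X →L[ℂ] X))
    (hsurj : Function.Surjective φ)
    (h : ∀ A B : X →L[ℂ] X,
      (∃ (x : X) (f : X →L[ℂ] ℂ), x ≠ 0 ∧ f ≠ 0 ∧ B = f.smulRight x) →
      {y : X | (A * B) y = y} = {y : X | (φ A * φ B) y = y}) :
    φ 1 = 1 ∨ φ 1 = -1 := by
  set T := φ 1 with hT
  have key : ∀ x : X, T x = x ∨ T x = -x := by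
    intro x
    rcases eq_or_ne x 0 with rfl | hx
    · left; simp
    obtain ⟨g, hg, hgx⟩ := exists_dual_vector ℂ x (norm_ne_zero_iff.mpr hx)
    set f : X →L[ℂ] ℂ := (‖x‖ : ℂ)⁻¹ • g with hf
    have hnx : (‖x‖ : ℂ) ≠ 0 := by
      simpa using norm_ne_zero_iff.mpr hx
    have hfx : f x = 1 := by
      simp only [hf, ContinuousLinearMap.smul_apply, smul_eq_mul, hgx]
      field_simp
      rfl
    have hfne : f ≠ 0 := by
      intro h0
      rw [h0] at hfx
      simp at hfx
    set B : X →L[ℂ] X := f.smulRight x with hB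
    have hBrank : ∃ (x' : X) (f' : X →L[ℂ] ℂ), x' ≠ 0 ∧ f' ≠ 0 ∧ B = f'.smulRight x' :=
      ⟨x, f, hx, hfne, rfl⟩
    have hBx : B x = x := by simp [hB, hfx]
    have hBB : ∀ z : X, (B * B) z = f z • x := by
      intro z
      simp [hB, ContinuousLinearMap.mul_apply, smul_smul, hfx]
    set R := φ B with hR
    have h1 := h B B hBrank
    have h2 := h 1 B hBrank
    rw [← hR] at h1 h2
    rw [← hT] at h2
    -- x is fixed by B*B, hence by R*R
    have hxBB : x ∈ {y : X | (B * B) y = y} := by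
      simp [hBB, hfx]
    have hxRR : R (R x) = x := by
      have := (Set.ext_iff.mp h1 x).mp hxBB
      simpa [ContinuousLinearMap.mul_apply] using this
    -- R x is fixed by R*R, hence by B*B, so R x = c • x
    have hRxRR : R x ∈ {y : X | (R * R) y = y} := by
      simp only [Set.mem_setOf_eq, ContinuousLinearMap.mul_apply]
      rw [hxRR]
    have hRxBB : (B * B) (R x) = R x := (Set.ext_iff.mp h1 (R x)).mpr hRxRR
    set c : ℂ := f (R x) with hc
    have hRx : R x = c • x := by
      rw [← hRxBB, hBB]
    -- c * c = 1
    have hcc : c * c = 1 := by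
      have e1 : (c * c) • x = x := by
        calc (c * c) • x = R (R x) := by
              rw [hRx, map_smul, hRx, smul_smul]
          _ = x := hxRR
      have e2 : (c * c - 1) • x = 0 := by
        rw [sub_smul, one_smul, e1, sub_self]
      rcases smul_eq_zero.mp e2 with h' | h'
      · exact sub_eq_zero.mp h'
      · exact absurd h' hx
    -- from h2 : x fixed by 1*B hence by T*R
    have hxTB : x ∈ {y : X | ((1 : X →L[ℂ] X) * B) y = y} := by
      simp [ContinuousLinearMap.mul_apply, hBx]
    have hTRx : T (R x) = x := by
      have := (Set.ext_iff.mp h2 x).mp hxTB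
      simpa [ContinuousLinearMap.mul_apply] using this
    have hTx : c • T x = x := by
      rw [← map_smul, ← hRx, hTRx]
    rcases mul_self_eq_one_iff.mp hcc with hc1 | hc1
    · left
      rw [hc1, one_smul] at hTx
      exact hTx
    · right
      rw [hc1, neg_smul, one_smul] at hTx
      exact neg_eq_iff_eq_neg.mp hTx
  -- sign constancy
  by_cases hall : ∀ x : X, T x = x
  · left; ext x; simpa using hall x
  · right
    push_neg at hall
    obtain ⟨y, hy⟩ := hall
    have hyne : y ≠ 0 := by rintro rfl; exact hy (by simp)
    have hTy : T y = -y := (key y).resolve_left hy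
    ext x
    show T x = -x
    rcases eq_or_ne x 0 with rfl | hx
    · simp
    rcases key x with hx1 | hx2
    · exfalso
      by_cases hdep : ∃ a : ℂ, y = a • x
      · obtain ⟨a, rfl⟩ := hdep
        exact hy (by rw [map_smul, hx1])
      · have hxy : x + y ≠ 0 := by
          intro h0
          exact hdep ⟨-1, by rw [neg_one_smul]; exact eq_neg_of_add_eq_zero_right h0⟩
        have hTxy : T (x + y) = x - y := by
          rw [map_add, hx1, hTy, sub_eq_add_neg]
        rcases key (x + y) with h' | h'
        · rw [hTxy] at h'
          have : y = 0 := by linear_combination (norm := module) -(1/2 : ℂ) • h'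
          exact hyne this
        · rw [hTxy] at h'
          have : x = 0 := by linear_combination (norm := module) (1/2 : ℂ) • h'
          exact hx this
    · exact hx2
end

section
/- Let X be a complex Banach space with dim X ≥ 3 and φ : B(X) → B(X) a surjective map satisfying Fix(AB) = Fix(φ(A)φ(B)) for all A ∈ B(X) and all rank-one B ∈ B(X). Then for every non-scalar A ∈ B(X), φ(A) = A or φ(A) = −A, and there is a bijection γ : ℂ → ℂ with φ(λI) = γ(λ)I for all λ ∈ ℂ. -/
open ContinuousLinearMap

variable {X : Type*} [NormedAddCommGroup X] [NormedSpace ℂ X] [CompleteSpace X]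

open Submodule Cardinal


lemma ex_one' {x : X} (hx : x ≠ 0) : ∃ f : X →L[ℂ] ℂ, f x = 1 :=
  SeparatingDual.exists_eq_one hx

lemma ex_val' {f : X →L[ℂ] ℂ} (hf : f ≠ 0) : ∃ z, f z = 1 := by
  obtain ⟨z₀, hz₀⟩ : ∃ z₀, f z₀ ≠ 0 := by
    by_contra h'; push_neg at h'
    exact hf (by ext y; simp [h' y])
  exact ⟨(f z₀)⁻¹ • z₀, by simp [inv_mul_cancel₀ hz₀]⟩

lemma ex_pair' {u v : X} (hu : u ≠ 0) (hv : ∀ c : ℂ, v ≠ c • u) :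
    ∃ p q : X →L[ℂ] ℂ, p u = 1 ∧ p v = 0 ∧ q u = 0 ∧ q v = 1 := by
  have hli : LinearIndependent ℂ ![u, v] := by
    rw [LinearIndependent.pair_iff]
    intro s t hst
    rcases eq_or_ne t 0 with rfl | ht
    · rw [zero_smul, add_zero] at hst
      rcases smul_eq_zero.mp hst with h | h
      · exact ⟨h, rfl⟩
      · exact absurd h hu
    · exfalso
      apply hv (-(t⁻¹ * s))
      have : v = t⁻¹ • (-(s • u)) := by
        rw [eq_comm, inv_smul_eq_iff₀ ht, ← neg_eq_iff_add_eq_zero.mpr hst]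
      rw [this, smul_neg, smul_smul, ← neg_smul]
  set P : Submodule ℂ X := Submodule.span ℂ (Set.range ![u, v]) with hP
  have : FiniteDimensional ℂ P := FiniteDimensional.span_of_finite ℂ (Set.finite_range _)
  let b : Module.Basis (Fin 2) ℂ P := Module.Basis.span hli
  have hb0 : (b 0 : X) = u := congrArg Subtype.val (Module.Basis.span_apply hli 0)
  have hb1 : (b 1 : X) = v := congrArg Subtype.val (Module.Basis.span_apply hli 1)
  obtain ⟨Pf, hPf, -⟩ := exists_extension_norm_eq P (LinearMap.toContinuousLinearMap (b.coord 0))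
  obtain ⟨Qf, hQf, -⟩ := exists_extension_norm_eq P (LinearMap.toContinuousLinearMap (b.coord 1))
  have hup : u ∈ P := subset_span ⟨0, rfl⟩
  have hvp : v ∈ P := subset_span ⟨1, rfl⟩
  have h0 : (⟨u, hup⟩ : P) = b 0 := Subtype.ext hb0.symm
  have h1 : (⟨v, hvp⟩ : P) = b 1 := Subtype.ext hb1.symm
  refine ⟨Pf, Qf, ?_, ?_, ?_, ?_⟩
  · have := hPf ⟨u, hup⟩; rw [h0] at this; simpa [hb0] using this
  · have := hPf ⟨v, hvp⟩; rw [h1] at this; simpa [hb1] using this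
  · have := hQf ⟨u, hup⟩; rw [h0] at this; simpa [hb0] using this
  · have := hQf ⟨v, hvp⟩; rw [h1] at this; simpa [hb1] using this

lemma ex_pair_val' {u v : X} (hu : u ≠ 0) (hv : ∀ c : ℂ, v ≠ c • u) (a c : ℂ) :
    ∃ k : X →L[ℂ] ℂ, k u = a ∧ k v = c := by
  obtain ⟨p, q, h1, h2, h3, h4⟩ := ex_pair' hu hv
  exact ⟨a • p + c • q, by simp [h1, h2, h3, h4], by simp [h1, h2, h3, h4]⟩

lemma ex_z' (hdim : 3 ≤ Module.rank ℂ X) {f : X →L[ℂ] ℂ} (hf : f ≠ 0) (x' : X) :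
    ∃ z : X, f z = 1 ∧ ∀ c : ℂ, z ≠ c • x' := by
  obtain ⟨z₀, hz₀⟩ := ex_val' hf
  by_contra hcon
  push_neg at hcon
  have hcon' : ∀ z : X, f z = 1 → ∃ c : ℂ, z = c • x' := fun z hz => hcon z hz
  have hspan : ∀ y : X, y ∈ Submodule.span ℂ ({x', z₀} : Set X) := by
    have hx'mem : x' ∈ Submodule.span ℂ ({x', z₀} : Set X) := subset_span (by simp)
    have hz₀mem : z₀ ∈ Submodule.span ℂ ({x', z₀} : Set X) := subset_span (by simp)
    intro y
    rcases eq_or_ne (f y) 0 with h0 | h0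
    · have : f (z₀ + y) = 1 := by simp [hz₀, h0]
      obtain ⟨c, hc⟩ := hcon' _ this
      have hy : y = c • x' - z₀ := by rw [← hc]; abel
      rw [hy]
      exact sub_mem (smul_mem _ _ hx'mem) hz₀mem
    · obtain ⟨c, hc⟩ := hcon' ((f y)⁻¹ • y) (by simp [inv_mul_cancel₀ h0])
      have hy : y = (f y * c) • x' := by
        have := congrArg (fun w : X => (f y) • w) hc
        simpa [smul_smul, mul_inv_cancel₀ h0] using this
      rw [hy]
      exact smul_mem _ _ hx'mem
  have hle : Module.rank ℂ X ≤ 2 := by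
    have h1 : (⊤ : Submodule ℂ X) ≤ Submodule.span ℂ ({x', z₀} : Set X) := fun y _ => hspan y
    calc Module.rank ℂ X = Module.rank ℂ (⊤ : Submodule ℂ X) := (rank_top ℂ X).symm
      _ ≤ Module.rank ℂ (Submodule.span ℂ ({x', z₀} : Set X)) := Submodule.rank_mono h1
      _ ≤ #({x', z₀} : Set X) := rank_span_le _
      _ ≤ 2 := by
          have := Cardinal.mk_insert_le (a := x') (s := ({z₀} : Set X))
          have h2 : #({z₀} : Set X) = 1 := Cardinal.mk_singleton _
          calc #({x', z₀} : Set X) ≤ #({z₀} : Set X) + 1 := this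
            _ = 2 := by rw [h2]; norm_num
  have h32 : (3 : Cardinal) ≤ 2 := hdim.trans hle
  norm_num at h32

lemma prop_of_ker' {f g : X →L[ℂ] ℂ} (hker : ∀ z, f z = 0 ↔ g z = 0) (hf : f ≠ 0) :
    ∃ c : ℂ, c ≠ 0 ∧ g = c • f := by
  obtain ⟨x₀, hx₀⟩ := ex_val' hf
  refine ⟨g x₀, ?_, ?_⟩
  · intro h0
    have : f x₀ = 0 := (hker x₀).mpr h0
    rw [hx₀] at this; exact one_ne_zero this
  · ext y
    have h1 : f (y - f y • x₀) = 0 := by simp [hx₀]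
    have h2 : g (y - f y • x₀) = 0 := (hker _).mp h1
    simp only [map_sub, map_smul, smul_eq_mul] at h2
    rw [ContinuousLinearMap.smul_apply, smul_eq_mul, sub_eq_zero.mp h2, mul_comm]

theorem stmt18 (hdim : 3 ≤ Module.rank ℂ X) (φ : (X →L[ℂ] X) → (X →L[ℂ] X))
    (hsurj : Function.Surjective φ)
    (h : ∀ A B : X →L[ℂ] X,
      (∃ (x : X) (f : X →L[ℂ] ℂ), x ≠ 0 ∧ f ≠ 0 ∧ B = f.smulRight x) →
      {y : X | (A * B) y = y} = {y : X | (φ A * φ B) y = y}) :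
    (∀ A : X →L[ℂ] X, (∀ l : ℂ, A ≠ l • (1 : X →L[ℂ] X)) → φ A = A ∨ φ A = -A) ∧
    ∃ γ : ℂ → ℂ, Function.Bijective γ ∧
      ∀ l : ℂ, φ (l • (1 : X →L[ℂ] X)) = γ l • (1 : X →L[ℂ] X) := by
  classical
  -- pointwise form of the hypothesis
  have H : ∀ (A : X →L[ℂ] X) (x : X) (f : X →L[ℂ] ℂ), x ≠ 0 → f ≠ 0 →
      ∀ y : X, (f y • A x = y ↔ (φ A) ((φ (f.smulRight x)) y) = y) := by
    intro A x f hx hf y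
    have h1 := h A (f.smulRight x) ⟨x, f, hx, hf, rfl⟩
    have h2 := Set.ext_iff.mp h1 y
    simpa only [Set.mem_setOf_eq, mul_apply_eq_comp, smulRight_apply, map_smul] using h2
  have hscal : ∀ (s : ℂ) (w : X), w ≠ 0 → s • w = w → s = 1 := by
    intro s w hw hsw
    have h0 : (s - 1) • w = 0 := by rw [sub_smul, one_smul, hsw, sub_self]
    rcases smul_eq_zero.mp h0 with h' | h'
    · exact sub_eq_zero.mp h'
    · exact absurd h' hw
  -- Step 1: the image of a rank-one operator is rank one
  have step1 : ∀ (x : X) (f : X →L[ℂ] ℂ), x ≠ 0 → f ≠ 0 →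
      ∃ (u : X) (g : X →L[ℂ] ℂ), u ≠ 0 ∧ φ (f.smulRight x) = g.smulRight u := by
    intro x f hx hf
    set D := φ (f.smulRight x) with hD
    obtain ⟨h₁, hh₁⟩ := ex_one' hx
    obtain ⟨z, hz⟩ := ex_val' hf
    have hzne : z ≠ 0 := by intro h0; rw [h0, map_zero] at hz; exact one_ne_zero hz.symm
    have hDne : D ≠ 0 := by
      intro h0
      have hzfix : f z • (h₁.smulRight z) x = z := by
        simp [smulRight_apply, hh₁, hz]
      have := (H (h₁.smulRight z) x f hx hf z).mp hzfix
      rw [← hD, h0] at this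
      simp only [zero_apply, map_zero] at this
      exact hzne this.symm
    obtain ⟨v₀, hv₀⟩ : ∃ v₀, D v₀ ≠ 0 := by
      by_contra h'; push_neg at h'
      exact hDne (ContinuousLinearMap.ext fun y => by simp [h' y])
    have key : ∀ y, ∃ c : ℂ, D y = c • D v₀ := by
      intro y
      by_contra h'
      push_neg at h'
      obtain ⟨p, q, hp1, hp2, hq1, hq2⟩ := ex_pair' hv₀ h'
      obtain ⟨A, hA⟩ := hsurj (p.smulRight v₀ + q.smulRight y)
      have hv₀fix : (φ A) (D v₀) = v₀ := by
        rw [hA]; simp [smulRight_apply, hp1, hq1]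
      have hyfix : (φ A) (D y) = y := by
        rw [hA]; simp [smulRight_apply, hp2, hq2]
      have h1 := (H A x f hx hf v₀).mpr hv₀fix
      have h2 := (H A x f hx hf y).mpr hyfix
      have hv₀ne : v₀ ≠ 0 := by intro h0; rw [h0, map_zero] at hv₀; exact hv₀ rfl
      have hfv₀ : f v₀ ≠ 0 := by
        intro h0; rw [h0, zero_smul] at h1; exact hv₀ne h1.symm
      apply h' (f y * (f v₀)⁻¹)
      calc D y = D (f y • A x) := by rw [h2]
        _ = f y • D (A x) := map_smul D _ _
        _ = (f y * (f v₀)⁻¹) • (f v₀ • D (A x)) := by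
              rw [smul_smul, mul_assoc, inv_mul_cancel₀ hfv₀, mul_one]
        _ = (f y * (f v₀)⁻¹) • D (f v₀ • A x) := by rw [map_smul]
        _ = (f y * (f v₀)⁻¹) • D v₀ := by rw [h1]
    obtain ⟨hfun, hhu⟩ := ex_one' hv₀
    refine ⟨D v₀, hfun.comp D, hv₀, ?_⟩
    ext y
    obtain ⟨c, hc⟩ := key y
    simp [smulRight_apply, hc, hhu]
  -- Steps 2 and 3 : φ(B) = c • B for rank one B
  have step23 : ∀ (x : X) (f : X →L[ℂ] ℂ), x ≠ 0 → f ≠ 0 →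
      ∃ c : ℂ, c ≠ 0 ∧ φ (f.smulRight x) = c • (f.smulRight x) := by
    intro x f hx hf
    obtain ⟨u, g, hu, hDeq⟩ := step1 x f hx hf
    obtain ⟨x₂, hx₂⟩ := ex_val' hf
    obtain ⟨f₂, hf₂⟩ := ex_one' hx
    have hx₂ne : x₂ ≠ 0 := by intro h0; rw [h0, map_zero] at hx₂; exact one_ne_zero hx₂.symm
    have hf₂ne : f₂ ≠ 0 := by intro h0; rw [h0] at hf₂; simp at hf₂
    obtain ⟨u₂, g₂, hu₂, hD₂eq⟩ := step1 x₂ f₂ hx₂ne hf₂ne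
    -- x is fixed by B ∘ B₂ where B = f.smulRight x, B₂ = f₂.smulRight x₂
    have hfix0 : f₂ x • (f.smulRight x) x₂ = x := by
      simp [smulRight_apply, hx₂, hf₂]
    have hfix := (H (f.smulRight x) x₂ f₂ hx₂ne hf₂ne x).mp hfix0
    rw [hDeq, hD₂eq] at hfix
    simp only [smulRight_apply, map_smul, smul_smul, smul_eq_mul] at hfix
    -- hfix : (g₂ x * g u₂) • u = x
    have htne : g₂ x * g u₂ ≠ 0 := by
      intro h0; rw [h0, zero_smul] at hfix; exact hx hfix.symm
    set t : ℂ := g₂ x * g u₂ with ht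
    have hux : u = t⁻¹ • x := by
      have h3 := congrArg (fun w : X => t⁻¹ • w) hfix
      simpa [smul_smul, inv_mul_cancel₀ htne] using h3
    have hBg' : φ (f.smulRight x) = (t⁻¹ • g).smulRight x := by
      rw [hDeq, hux]; ext y
      simp only [smulRight_apply, ContinuousLinearMap.smul_apply, smul_eq_mul, smul_smul]
      rw [mul_comm]
    -- kernels of f and t⁻¹ • g coincide
    have hker : ∀ z, f z = 0 ↔ (t⁻¹ • g) z = 0 := by
      intro z
      constructor
      · intro hfz
        by_contra hgz
        have hzne : z ≠ 0 := by intro h0; rw [h0, map_zero] at hgz; exact hgz rfl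
        have hwne : (((t⁻¹ • g) z)⁻¹ • z : X) ≠ 0 := smul_ne_zero (inv_ne_zero hgz) hzne
        obtain ⟨A, hA⟩ := hsurj (f₂.smulRight (((t⁻¹ • g) z)⁻¹ • z))
        have hrhs : (φ A) ((φ (f.smulRight x)) (((t⁻¹ • g) z)⁻¹ • z)) =
            ((t⁻¹ • g) z)⁻¹ • z := by
          rw [hA, hBg']
          simp only [smulRight_apply, map_smul, smul_smul, smul_eq_mul,
            inv_mul_cancel₀ hgz, one_mul, hf₂, mul_one]
        have hcl := (H A x f hx hf (((t⁻¹ • g) z)⁻¹ • z)).mpr hrhs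
        rw [map_smul, hfz, smul_zero, zero_smul] at hcl
        exact hwne hcl.symm
      · intro hgz
        by_contra hfz
        have hzne : z ≠ 0 := by intro h0; rw [h0, map_zero] at hfz; exact hfz rfl
        have hwne : ((f z)⁻¹ • z : X) ≠ 0 := smul_ne_zero (inv_ne_zero hfz) hzne
        have hlhs : f ((f z)⁻¹ • z) • (f₂.smulRight ((f z)⁻¹ • z)) x = (f z)⁻¹ • z := by
          simp [smulRight_apply, hf₂, map_smul, inv_mul_cancel₀ hfz]
        have hcl := (H (f₂.smulRight ((f z)⁻¹ • z)) x f hx hf ((f z)⁻¹ • z)).mp hlhs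
        rw [hBg'] at hcl
        simp only [smulRight_apply, map_smul, hgz, smul_zero, zero_smul, map_zero] at hcl
        exact hwne hcl.symm
    obtain ⟨c, hc, hceq⟩ := prop_of_ker' hker hf
    refine ⟨c, hc, ?_⟩
    rw [hBg', hceq]
    ext y
    simp only [smulRight_apply, ContinuousLinearMap.smul_apply, smul_eq_mul, smul_smul]
  -- pairing lemma
  have pairing : ∀ (x₁ x₂ : X) (f₁ f₂ : X →L[ℂ] ℂ) (c₁ c₂ : ℂ),
      x₁ ≠ 0 → x₂ ≠ 0 → f₂ ≠ 0 →
      φ (f₁.smulRight x₁) = c₁ • (f₁.smulRight x₁) →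
      φ (f₂.smulRight x₂) = c₂ • (f₂.smulRight x₂) →
      f₁ x₂ * f₂ x₁ = 1 → c₁ * c₂ = 1 := by
    intro x₁ x₂ f₁ f₂ c₁ c₂ hx₁ hx₂ hf₂ hc₁ hc₂ hp
    have hfix0 : f₂ x₁ • (f₁.smulRight x₁) x₂ = x₁ := by
      rw [smulRight_apply, smul_smul, mul_comm, hp, one_smul]
    have hfix := (H (f₁.smulRight x₁) x₂ f₂ hx₂ hf₂ x₁).mp hfix0
    rw [hc₁, hc₂] at hfix
    simp only [ContinuousLinearMap.smul_apply, smulRight_apply, map_smul, smul_smul,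
      smul_eq_mul] at hfix
    have hs := hscal _ _ hx₁ hfix
    linear_combination hs - c₁ * c₂ * hp
  -- a reference rank-one operator and the global sign
  obtain ⟨x₀, hx₀⟩ : ∃ x₀ : X, x₀ ≠ 0 := by
    have hpos : 0 < Module.rank ℂ X := lt_of_lt_of_le (by norm_num) hdim
    exact rank_pos_iff_exists_ne_zero.mp hpos
  obtain ⟨f₀, hf₀⟩ := ex_one' hx₀
  have hf₀ne : f₀ ≠ 0 := by intro h0; rw [h0] at hf₀; simp at hf₀
  obtain ⟨ε, hεne, hε⟩ := step23 x₀ f₀ hx₀ hf₀ne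
  have hε2 : ε * ε = 1 :=
    pairing x₀ x₀ f₀ f₀ ε ε hx₀ hx₀ hf₀ne hε hε (by rw [hf₀, one_mul])
  have hglobal : ∀ (x : X) (f : X →L[ℂ] ℂ), x ≠ 0 → f ≠ 0 →
      φ (f.smulRight x) = ε • (f.smulRight x) := by
    intro x f hx hf
    obtain ⟨c, hc, hceq⟩ := step23 x f hx hf
    obtain ⟨z, hz1, hz2⟩ := ex_z' hdim hf x₀
    obtain ⟨w, hw1, hw2⟩ := ex_z' hdim hf₀ne x
    have hzne : z ≠ 0 := by intro h0; rw [h0, map_zero] at hz1; exact one_ne_zero hz1.symm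
    have hwne : w ≠ 0 := by intro h0; rw [h0, map_zero] at hw1; exact one_ne_zero hw1.symm
    obtain ⟨hh, hh1, hh2⟩ := ex_pair_val' hx hw2 1 1
    obtain ⟨k, hk1, hk2⟩ := ex_pair_val' hx₀ hz2 1 1
    have hhne : hh ≠ 0 := by intro h0; rw [h0] at hh1; simp at hh1
    have hkne : k ≠ 0 := by intro h0; rw [h0] at hk1; simp at hk1
    obtain ⟨cR, hcR, hReq⟩ := step23 z hh hzne hhne
    obtain ⟨cR', hcR', hR'eq⟩ := step23 w k hwne hkne
    have e1 : c * cR = 1 :=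
      pairing x z f hh c cR hx hzne hhne hceq hReq (by rw [hz1, hh1, one_mul])
    have e2 : cR * cR' = 1 :=
      pairing z w hh k cR cR' hzne hwne hkne hReq hR'eq (by rw [hh2, hk2, one_mul])
    have e3 : cR' * ε = 1 :=
      pairing w x₀ k f₀ cR' ε hwne hx₀ hf₀ne hR'eq hε (by rw [hk1, hw1, one_mul])
    have hcε : c = ε := by
      have g1 : c = cR' := by
        have g0 : c * (cR * cR') = c := by rw [e2, mul_one]
        rw [← mul_assoc, e1, one_mul] at g0; exact g0.symm
      have g2 : cR' = ε := by
        have g0 : cR' * (ε * ε) = cR' := by rw [hε2, mul_one]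
        rw [← mul_assoc, e3, one_mul] at g0; exact g0.symm
      rw [g1, g2]
    rw [hceq, hcε]
  have hεne0 : ε ≠ 0 := hεne
  -- the main conclusion: φ A = ε • A for every A
  have main : ∀ A : X →L[ℂ] X, φ A = ε • A := by
    intro A
    ext x
    rcases eq_or_ne x 0 with rfl | hx
    · simp
    rw [ContinuousLinearMap.smul_apply]
    rcases eq_or_ne (A x) 0 with hAx | hAx
    · rw [hAx, smul_zero]
      by_contra hne
      obtain ⟨f₁, hf₁⟩ := ex_one' hne
      have hfne : (ε • f₁ : X →L[ℂ] ℂ) ≠ 0 := by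
        intro h0
        have h3 := congrArg (fun k : X →L[ℂ] ℂ => k ((φ A) x)) h0
        simp only [ContinuousLinearMap.smul_apply, smul_eq_mul, hf₁, mul_one,
          zero_apply] at h3
        exact hεne0 h3
      have hrhs : (φ A) ((φ ((ε • f₁).smulRight x)) (ε • (φ A) x)) = ε • (φ A) x := by
        rw [hglobal x (ε • f₁) hx hfne]
        simp only [ContinuousLinearMap.smul_apply, smulRight_apply, map_smul, hf₁,
          smul_eq_mul, mul_one, smul_smul, hε2, one_smul]
      have hcl := (H A x (ε • f₁) hx hfne (ε • (φ A) x)).mpr hrhs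
      rw [hAx, smul_zero] at hcl
      exact (smul_ne_zero hεne0 hne) hcl.symm
    · obtain ⟨f₁, hf₁⟩ := ex_one' hAx
      have hfne : f₁ ≠ 0 := by intro h0; rw [h0] at hf₁; simp at hf₁
      have hlhs : f₁ (A x) • A x = A x := by rw [hf₁, one_smul]
      have hcl := (H A x f₁ hx hfne (A x)).mp hlhs
      rw [hglobal x f₁ hx hfne] at hcl
      simp only [ContinuousLinearMap.smul_apply, smulRight_apply, hf₁, one_smul,
        map_smul] at hcl
      calc (φ A) x = (ε * ε) • (φ A) x := by rw [hε2, one_smul]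
        _ = ε • (ε • (φ A) x) := by rw [mul_smul]
        _ = ε • A x := by rw [hcl]
  have hε1 : ε = 1 ∨ ε = -1 := mul_self_eq_one_iff.mp hε2
  constructor
  · intro A _
    rcases hε1 with h1 | h1
    · left; rw [main A, h1, one_smul]
    · right; rw [main A, h1, neg_one_smul]
  · refine ⟨fun l => ε * l,
      ⟨fun a b hab => mul_left_cancel₀ hεne0 hab, fun b => ⟨ε⁻¹ * b, by field_simp⟩⟩,
      fun l => ?_⟩
    rw [main, smul_smul]
end
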